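/- Let U be a nonempty finite set, F = (S_1, …, S_m) a family of nonempty subsets of U, G(U,F) the associated split graph, and t ≥ 1 an integer. Then (U,F) has a hitting set of size at most t if and only if G(U,F) admits a Roman dominating function of weight at most 2t. -/

import Mathlib

/-- Adjacency of the split graph `G(U,F)`: the universe `α` forms a clique, each set
`S_j` has two corresponding set-vertices `s_j^1, s_j^2` (encoded as `(j, i) : Fin m × Fin 2`),
and `u ∈ α` is adjacent to `s_j^i` iff `u ∈ S_j`; the set-vertices are pairwise non-adjacent. -/
def splitAdj {α : Type*} {m : ℕ} (F : Fin m → Finset α) :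
    (α ⊕ Fin m × Fin 2) → (α ⊕ Fin m × Fin 2) → Prop
  | .inl u, .inl v => u ≠ v
  | .inl u, .inr p => u ∈ F p.1
  | .inr p, .inl u => u ∈ F p.1
  | .inr _, .inr _ => False

/-- The split graph `G(U,F)`. -/
def splitGraph {α : Type*} {m : ℕ} (F : Fin m → Finset α) :
    SimpleGraph (α ⊕ Fin m × Fin 2) where
  Adj := splitAdj F
  symm := ⟨by rintro (u|p) (v|q) h <;> simp_all [splitAdj]; exact Ne.symm h⟩
  loopless := ⟨by rintro (u|p) h <;> simp_all [splitAdj]⟩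


/-- For `U` nonempty, all sets `S_j` nonempty and `t ≥ 1`: `(U,F)` has a
hitting set of size at most `t` iff the split graph `G(U,F)` admits a Roman dominating
function of weight at most `2t`. -/
theorem splitGraph_hitting_set_iff_rdf
    {α : Type*} [Fintype α] [Nonempty α] {m : ℕ} (F : Fin m → Finset α)
    (hne : ∀ j, (F j).Nonempty) (t : ℕ) (ht : 1 ≤ t) :
    (∃ H : Finset α, (∀ j : Fin m, ∃ u ∈ H, u ∈ F j) ∧ H.card ≤ t) ↔
    (∃ f : (α ⊕ Fin m × Fin 2) → ℕ, (∀ x, f x ≤ 2) ∧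
      (∀ x, f x = 0 → ∃ y, (splitGraph F).Adj x y ∧ f y = 2) ∧
      (∑ x, f x) ≤ 2 * t) := by
  classical
  constructor
  · rintro ⟨H, hH, hcard⟩
    obtain ⟨a⟩ := ‹Nonempty α›
    obtain ⟨H', hH'ne, hH'hit, hH'card⟩ :
        ∃ H' : Finset α, H'.Nonempty ∧ (∀ j, ∃ u ∈ H', u ∈ F j) ∧ H'.card ≤ t := by
      rcases H.eq_empty_or_nonempty with rfl | hne'
      · exact ⟨{a}, Finset.singleton_nonempty a,
          fun j => by simpa using hH j, by simpa⟩
      · exact ⟨H, hne', hH, hcard⟩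
    refine ⟨fun x => match x with
      | .inl u => if u ∈ H' then 2 else 0
      | .inr _ => 0, ?_, ?_, ?_⟩
    · rintro (u|p)
      · dsimp only; split <;> omega
      · exact Nat.zero_le 2
    · rintro (v|p) hx
      · dsimp only at hx
        have hv : v ∉ H' := by by_contra h; simp [h] at hx
        obtain ⟨u, hu⟩ := hH'ne
        refine ⟨.inl u, ?_, ?_⟩
        · show splitAdj F (.inl v) (.inl u)
          exact fun h => hv (h ▸ hu)
        · simp [hu]
      · obtain ⟨u, huH, huF⟩ := hH'hit p.1
        refine ⟨.inl u, ?_, ?_⟩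
        · show splitAdj F (.inr p) (.inl u)
          exact huF
        · simp [huH]
    · rw [Fintype.sum_sum_type]
      have : (∑ u : α, if u ∈ H' then 2 else 0) = 2 * H'.card := by
        rw [Finset.sum_ite_mem, Finset.univ_inter, Finset.sum_const, smul_eq_mul, mul_comm]
      simp only [Finset.sum_const_zero, add_zero]
      omega
  · rintro ⟨f, hf2, hdom, hsum⟩
    set A : Finset α := Finset.univ.filter (fun u => f (.inl u) = 2) with hA
    set bad : Finset (Fin m) := Finset.univ.filter (fun j => ∀ u ∈ F j, ¬ f (.inl u) = 2)
      with hB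
    have hbad1 : ∀ j ∈ bad, ∀ i : Fin 2, 1 ≤ f (.inr (j, i)) := by
      intro j hj i
      by_contra h
      have h0 : f (.inr (j, i)) = 0 := by omega
      obtain ⟨y, hadj, hy⟩ := hdom _ h0
      cases y with
      | inl u =>
        have huF : u ∈ F j := hadj
        exact (Finset.mem_filter.mp hj).2 u huF hy
      | inr q => exact hadj
    have key : 2 * A.card + 2 * bad.card ≤ ∑ x, f x := by
      rw [Fintype.sum_sum_type]
      have h1 : 2 * A.card ≤ ∑ u, f (.inl u) := by
        calc 2 * A.card = ∑ _u ∈ A, 2 := by rw [Finset.sum_const, smul_eq_mul, mul_comm]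
          _ ≤ ∑ u ∈ A, f (.inl u) :=
              Finset.sum_le_sum (fun u hu => (Finset.mem_filter.mp hu).2.ge)
          _ ≤ ∑ u, f (.inl u) := Finset.sum_le_sum_of_subset (Finset.subset_univ A)
      have h2 : 2 * bad.card ≤ ∑ p : Fin m × Fin 2, f (.inr p) := by
        calc 2 * bad.card = ∑ _p ∈ bad ×ˢ (Finset.univ : Finset (Fin 2)), 1 := by
              rw [Finset.sum_const, smul_eq_mul, mul_one, Finset.card_product]
              simp [mul_comm]
          _ ≤ ∑ p ∈ bad ×ˢ Finset.univ, f (.inr p) :=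
              Finset.sum_le_sum (fun p hp => hbad1 p.1 (Finset.mem_product.mp hp).1 p.2)
          _ ≤ ∑ p, f (.inr p) := Finset.sum_le_sum_of_subset (Finset.subset_univ _)
      omega
    refine ⟨A ∪ bad.image (fun j => (hne j).choose), ?_, ?_⟩
    · intro j
      by_cases hj : ∃ u ∈ F j, f (.inl u) = 2
      · obtain ⟨u, huF, hu2⟩ := hj
        exact ⟨u, Finset.mem_union_left _
          (Finset.mem_filter.mpr ⟨Finset.mem_univ _, hu2⟩), huF⟩
      · push_neg at hj
        have hjbad : j ∈ bad := Finset.mem_filter.mpr ⟨Finset.mem_univ _, hj⟩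
        exact ⟨(hne j).choose, Finset.mem_union_right _
          (Finset.mem_image_of_mem _ hjbad), (hne j).choose_spec⟩
    · have h1 := Finset.card_union_le A (bad.image (fun j => (hne j).choose))
      have h2 := Finset.card_image_le (s := bad) (f := fun j => (hne j).choose)
      omega
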